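/- Let G=(V,ξ) be a bipartite graph with V nonempty (i.e., there is a 2-coloring of V such that every edge of G joins the two color classes). Then no vector α of positive reals satisfies Ncond for G. -/

import Mathlib

open Classical Finset

noncomputable section

def nbr {V : Type} [Fintype V] (G : SimpleGraph V) (S : Finset V) : Finset V :=
  Finset.univ.filter fun j => ∃ i ∈ S, G.Adj i j

def aSum {V : Type} (α : V → ℝ) (S : Finset V) : ℝ := ∑ i ∈ S, α i

def IsIndep {V : Type} (G : SimpleGraph V) (I : Finset V) : Prop :=
  I.Nonempty ∧ ∀ i ∈ I, ∀ j ∈ I, ¬ G.Adj i j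

def indepSets {V : Type} [Fintype V] (G : SimpleGraph V) : Finset (Finset V) :=
  Finset.univ.filter fun I => IsIndep G I

def Ncond {V : Type} [Fintype V] (G : SimpleGraph V) (α : V → ℝ) : Prop :=
  ∀ I ∈ indepSets G, aSum α I < aSum α (nbr G I)

def Tlist {V : Type} [Fintype V] [DecidableEq V] (G : SimpleGraph V) (α : V → ℝ) :
    List V → Finset V → ℝ
  | [], _ => 1
  | i :: l, P =>
      α i / (aSum α (nbr G (insert i P)) - aSum α (insert i P)) * Tlist G α l (insert i P)

def Erat {V : Type} [Fintype V] [DecidableEq V] (G : SimpleGraph V) (α : V → ℝ) :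
    List V → Finset V → ℝ
  | [], _ => 0
  | i :: l, P =>
      aSum α (nbr G (insert i P)) / (aSum α (nbr G (insert i P)) - aSum α (insert i P)) +
        Erat G α l (insert i P)

def TI {V : Type} [Fintype V] [DecidableEq V] (G : SimpleGraph V) (α : V → ℝ) (I : Finset V) : ℝ :=
  ∑ l ∈ I.toList.permutations.toFinset, Tlist G α l ∅

def EI {V : Type} [Fintype V] [DecidableEq V] (G : SimpleGraph V) (α : V → ℝ) (I : Finset V) : ℝ :=
  ∑ l ∈ I.toList.permutations.toFinset, Erat G α l ∅ * Tlist G α l ∅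

def meanQ {V : Type} [Fintype V] [DecidableEq V] (G : SimpleGraph V) (α : V → ℝ) : ℝ :=
  (1 + ∑ I ∈ indepSets G, TI G α I)⁻¹ * ∑ I ∈ indepSets G, EI G α I

def IsWord {V : Type} (G : SimpleGraph V) (w : List V) : Prop :=
  w.Pairwise fun a b => ¬ G.Adj a b

def piHatAux {V : Type} [Fintype V] [DecidableEq V] (G : SimpleGraph V) (α : V → ℝ) :
    List V → Finset V → ℝ
  | [], _ => 1
  | i :: l, P => α i / aSum α (nbr G (insert i P)) * piHatAux G α l (insert i P)

def piHat {V : Type} [Fintype V] [DecidableEq V] (G : SimpleGraph V) (α : V → ℝ) (w : List V) : ℝ :=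
  piHatAux G α w ∅

def addEdge {V : Type} (G : SimpleGraph V) (u v : V) : SimpleGraph V :=
  G ⊔ SimpleGraph.fromEdgeSet {s(u, v)}

end

theorem stmt11 {V : Type} [Fintype V] [DecidableEq V] [Nonempty V] (G : SimpleGraph V)
    (c : V → Bool) (hc : ∀ i j, G.Adj i j → c i ≠ c j) :
    ¬ ∃ α : V → ℝ, (∀ i, 0 < α i) ∧ Ncond G α := by
  rintro ⟨α, hpos, hN⟩
  have key : ∀ (b : Bool), (univ.filter fun i => c i = b).Nonempty →
      aSum α (univ.filter fun i => c i = b) < aSum α (univ.filter fun i => c i = !b) := by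
    intro b hb
    have hind : (univ.filter fun i => c i = b) ∈ indepSets G := by
      rw [indepSets, Finset.mem_filter]
      simp only [IsIndep, mem_univ, true_and]
      refine ⟨hb, ?_⟩
      intro i hi j hj hadj
      exact hc i j hadj ((Finset.mem_filter.mp hi).2.trans (Finset.mem_filter.mp hj).2.symm)
    refine (hN _ hind).trans_le ?_
    apply Finset.sum_le_sum_of_subset_of_nonneg
    · intro j hj
      simp only [nbr, mem_filter, mem_univ, true_and] at hj ⊢
      obtain ⟨i, hi, hij⟩ := hj
      have := hc i j hij
      rw [hi] at this
      cases hj : c j <;> cases b <;> simp_all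
    · intro i _ _
      exact (hpos i).le
  have hpos' : ∀ (S : Finset V), S.Nonempty → 0 < aSum α S := fun S hS =>
    Finset.sum_pos (fun i _ => hpos i) hS
  by_cases ht : (univ.filter fun i => c i = true).Nonempty
  · by_cases hf : (univ.filter fun i => c i = false).Nonempty
    · have h1 := key true ht
      have h2 := key false hf
      simp only [Bool.not_true, Bool.not_false] at h1 h2
      linarith
    · have h2 := key true ht
      rw [Finset.not_nonempty_iff_eq_empty] at hf
      rw [show ((!true) = false) from rfl, hf] at h2
      have := hpos' _ ht
      simp only [aSum, Finset.sum_empty] at h2 this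
      linarith
  · have hf : (univ.filter fun i => c i = false).Nonempty := by
      rw [Finset.not_nonempty_iff_eq_empty] at ht
      obtain ⟨v⟩ := ‹Nonempty V›
      refine ⟨v, ?_⟩
      simp only [mem_filter, mem_univ, true_and]
      cases hv : c v
      · rfl
      · have hmem : v ∈ univ.filter fun i => c i = true :=
          Finset.mem_filter.mpr ⟨mem_univ v, hv⟩
        rw [ht] at hmem
        exact absurd hmem (Finset.notMem_empty v)
    have h2 := key false hf
    rw [Finset.not_nonempty_iff_eq_empty] at ht
    rw [show ((!false) = true) from rfl, ht] at h2
    have := hpos' _ hf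
    simp only [aSum, Finset.sum_empty] at h2 this
    linarith
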